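/- Let V be a complex vector space, let ω ∈ Λ²V, and let u, v ∈ V be linearly independent. If ω∧u lies in the subspace v∧(Λ²V) of Λ³V, then there exist vectors α, β ∈ V such that ω = u∧α + v∧β. -/

import Mathlib

open ExteriorAlgebra

namespace Stmt7Aux

open CliffordAlgebra

variable {V : Type*} [AddCommGroup V] [Module ℂ V]

lemma swap_eq (x y : V) : ι ℂ y * ι ℂ x = -(ι ℂ x * ι ℂ y) := by
  rw [eq_neg_iff_add_eq_zero, add_comm]
  exact ExteriorAlgebra.ι_add_mul_swap (R := ℂ) x y

lemma mul3_zero (x y : V) : ι ℂ x * ι ℂ y * ι ℂ x = 0 := by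
  rw [mul_assoc, swap_eq x y, mul_neg, ← mul_assoc, ι_sq_zero, zero_mul, neg_zero]

/-- contraction of a degree-2 element lands in the image of ι -/
lemma contract_mem (d : Module.Dual ℂ V) (x : ExteriorAlgebra ℂ V)
    (hx : x ∈ Submodule.span ℂ
      {x : ExteriorAlgebra ℂ V | ∃ a b : V, x = ι ℂ a * ι ℂ b}) :
    contractLeft d x ∈ LinearMap.range (ι ℂ : V →ₗ[ℂ] ExteriorAlgebra ℂ V) := by
  induction hx using Submodule.span_induction with
  | mem x hx =>
    obtain ⟨a, b, rfl⟩ := hx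
    refine ⟨d a • b - d b • a, ?_⟩
    rw [contractLeft_ι_mul, contractLeft_ι]
    simp [Algebra.algebraMap_eq_smul_one, mul_smul_comm, smul_sub]
  | zero => simp
  | add x y _ _ hx hy => rw [map_add]; exact add_mem hx hy
  | smul c x _ hx => rw [map_smul]; exact Submodule.smul_mem _ _ hx

/-- Leibniz rule for right multiplication by ι w, on degree-2 elements. -/
lemma contract_mul (d : Module.Dual ℂ V) (w : V) (x : ExteriorAlgebra ℂ V)
    (hx : x ∈ Submodule.span ℂ
      {x : ExteriorAlgebra ℂ V | ∃ a b : V, x = ι ℂ a * ι ℂ b}) :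
    contractLeft d (x * ι ℂ w) = contractLeft d x * ι ℂ w + d w • x := by
  induction hx using Submodule.span_induction with
  | mem x hx =>
    obtain ⟨a, b, rfl⟩ := hx
    rw [mul_assoc, contractLeft_ι_mul, contractLeft_ι_mul, contractLeft_ι,
      contractLeft_ι_mul, contractLeft_ι]
    simp only [Algebra.algebraMap_eq_smul_one, mul_smul_comm, mul_one, smul_sub,
      mul_sub, sub_mul, smul_mul_assoc]
    module
  | zero => simp
  | add x y _ _ hx hy =>
    rw [add_mul, map_add, hx, hy, map_add, add_mul, smul_add]
    abel
  | smul c x _ hx =>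
    rw [smul_mul_assoc, map_smul, hx, map_smul, smul_add, smul_mul_assoc, smul_comm]

lemma exists_dual [FiniteDimensional ℂ V] (u v : V)
    (huv : LinearIndependent ℂ ![u, v]) :
    ∃ f g : Module.Dual ℂ V, f u = 1 ∧ f v = 0 ∧ g u = 0 ∧ g v = 1 := by
  have hne : u ≠ v := by
    intro h
    have h01 : (![u, v] : Fin 2 → V) 0 = ![u, v] 1 := by simp [h]
    exact absurd (huv.injective h01) (by decide)
  have hs : LinearIndepOn ℂ id (Set.range ![u, v]) :=
    (linearIndepOn_id_range_iff huv.injective).mpr huv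
  let B := Module.Basis.extend hs
  have hu : u ∈ hs.extend (Set.subset_univ _) :=
    hs.subset_extend _ ⟨0, by simp⟩
  have hv : v ∈ hs.extend (Set.subset_univ _) :=
    hs.subset_extend _ ⟨1, by simp⟩
  have h1 : B ⟨u, hu⟩ = u := Module.Basis.extend_apply_self hs ⟨u, hu⟩
  have h2 : B ⟨v, hv⟩ = v := Module.Basis.extend_apply_self hs ⟨v, hv⟩
  have hne' : (⟨v, hv⟩ : hs.extend (Set.subset_univ _)) ≠ ⟨u, hu⟩ := by
    simp [Subtype.ext_iff, hne.symm]
  have hne'' : (⟨u, hu⟩ : hs.extend (Set.subset_univ _)) ≠ ⟨v, hv⟩ := by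
    simp [Subtype.ext_iff, hne]
  refine ⟨B.coord ⟨u, hu⟩, B.coord ⟨v, hv⟩, ?_, ?_, ?_, ?_⟩
  · have : B.coord ⟨u, hu⟩ (B ⟨u, hu⟩) = 1 := by
      rw [Module.Basis.coord_apply, Module.Basis.repr_self, Finsupp.single_eq_same]
    rwa [h1] at this
  · have : B.coord ⟨u, hu⟩ (B ⟨v, hv⟩) = 0 := by
      rw [Module.Basis.coord_apply, Module.Basis.repr_self, Finsupp.single_eq_of_ne hne'']
    rwa [h2] at this
  · have : B.coord ⟨v, hv⟩ (B ⟨u, hu⟩) = 0 := by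
      rw [Module.Basis.coord_apply, Module.Basis.repr_self, Finsupp.single_eq_of_ne hne']
    rwa [h1] at this
  · have : B.coord ⟨v, hv⟩ (B ⟨v, hv⟩) = 1 := by
      rw [Module.Basis.coord_apply, Module.Basis.repr_self, Finsupp.single_eq_same]
    rwa [h2] at this

end Stmt7Aux

open Stmt7Aux CliffordAlgebra

theorem stmt7 (V : Type*) [AddCommGroup V] [Module ℂ V] [FiniteDimensional ℂ V]
    (ω : ExteriorAlgebra ℂ V)
    (hω : ω ∈ Submodule.span ℂ
      {x : ExteriorAlgebra ℂ V | ∃ a b : V, x = ι ℂ a * ι ℂ b})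
    (u v : V) (huv : LinearIndependent ℂ ![u, v])
    (h : ∃ y ∈ Submodule.span ℂ
        {x : ExteriorAlgebra ℂ V | ∃ a b : V, x = ι ℂ a * ι ℂ b},
      ω * ι ℂ u = ι ℂ v * y) :
    ∃ α β : V, ω = ι ℂ u * ι ℂ α + ι ℂ v * ι ℂ β := by
  obtain ⟨y, hy, heq⟩ := h
  obtain ⟨f, g, hfu, hfv, hgu, hgv⟩ := exists_dual u v huv
  obtain ⟨a, ha⟩ := contract_mem f ω hω
  set ρ : ExteriorAlgebra ℂ V := ω - ι ℂ u * ι ℂ a with hρ_def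
  have hρ : ρ ∈ Submodule.span ℂ
      {x : ExteriorAlgebra ℂ V | ∃ a b : V, x = ι ℂ a * ι ℂ b} :=
    Submodule.sub_mem _ hω (Submodule.subset_span ⟨u, a, rfl⟩)
  obtain ⟨b, hb⟩ := contract_mem g ρ hρ
  set σ : ExteriorAlgebra ℂ V := ρ - ι ℂ v * ι ℂ b with hσ_def
  have hσ : σ ∈ Submodule.span ℂ
      {x : ExteriorAlgebra ℂ V | ∃ a b : V, x = ι ℂ a * ι ℂ b} :=
    Submodule.sub_mem _ hρ (Submodule.subset_span ⟨v, b, rfl⟩)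
  have hρu : ρ * ι ℂ u = ι ℂ v * y := by
    rw [hρ_def, sub_mul, heq, mul3_zero, sub_zero]
  have hσu : σ * ι ℂ u = ι ℂ v * (y - ι ℂ b * ι ℂ u) := by
    rw [hσ_def, sub_mul, hρu, mul_sub, mul_assoc]
  have hffω : contractLeft f (contractLeft f ω) = 0 :=
    contractLeft_contractLeft (Q := (0 : QuadraticForm ℂ V)) (d := f) ω
  have hggρ : contractLeft g (contractLeft g ρ) = 0 :=
    contractLeft_contractLeft (Q := (0 : QuadraticForm ℂ V)) (d := g) ρ
  have hfρ : contractLeft f ρ = 0 := by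
    rw [hρ_def, map_sub, contractLeft_ι_mul, hfu, one_smul, ha, hffω,
      mul_zero, sub_zero, sub_self]
  have hgσ : contractLeft g σ = 0 := by
    rw [hσ_def, map_sub, contractLeft_ι_mul, hgv, one_smul, hb, hggρ,
      mul_zero, sub_zero, sub_self]
  have hfσ : contractLeft f σ = f b • ι ℂ v := by
    rw [hσ_def, map_sub, hfρ, contractLeft_ι_mul, hfv, zero_smul, contractLeft_ι,
      Algebra.algebraMap_eq_smul_one, mul_smul_comm, mul_one]
    simp
  have hσu0 : σ * ι ℂ u = 0 := by
    have hL := contract_mul g u σ hσ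
    rw [hσu, hgσ, zero_mul, hgu, zero_smul, add_zero,
      contractLeft_ι_mul, hgv, one_smul] at hL
    have hy' : y - ι ℂ b * ι ℂ u =
        ι ℂ v * contractLeft g (y - ι ℂ b * ι ℂ u) := sub_eq_zero.mp hL
    rw [hσu, hy', ← mul_assoc, ι_sq_zero, zero_mul]
  have hσval : σ = f b • (ι ℂ u * ι ℂ v) := by
    have hL := contract_mul f u σ hσ
    rw [hσu0, map_zero, hfσ, hfu, one_smul, smul_mul_assoc, swap_eq u v,
      smul_neg, neg_add_eq_sub] at hL
    exact sub_eq_zero.mp hL.symm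
  refine ⟨a + f b • v, b, ?_⟩
  have hω' : ω = ι ℂ u * ι ℂ a + ι ℂ v * ι ℂ b + σ := by
    rw [hσ_def, hρ_def]; abel
  rw [hω', hσval, map_add, map_smul, mul_add, mul_smul_comm, add_right_comm]
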